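/- arXiv:1301.5573 — 2 statements merged into one kernel-verified Lean document; each statement's English description precedes it below -/
import Mathlib

section
/- Let R be an associative ring with unity and let (M_i)_{i ∈ I} be a family of Ding projective left R-modules. Then the direct sum ⊕_{i ∈ I} M_i is Ding projective. -/
universe u

open scoped TensorProduct DirectSum

/-- The subgroup of `E ⊗[ℤ] F` by which one quotients to obtain the balanced tensor
product `E ⊗_R F` of a right `R`-module `E` and a left `R`-module `F`. -/
def balancedSub (R : Type u) [Ring R] (E F : Type u) [AddCommGroup E] [Module Rᵐᵒᵖ E]
    [AddCommGroup F] [Module R F] : Submodule ℤ (TensorProduct ℤ E F) :=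
  Submodule.span ℤ
    {x | ∃ (r : R) (e : E) (f : F),
      x = (MulOpposite.op r • e) ⊗ₜ[ℤ] f - e ⊗ₜ[ℤ] (r • f)}

/-- The tensor product `E ⊗_R F` of a right `R`-module `E` and a left `R`-module `F`
over a possibly noncommutative ring `R`, realized as a quotient of `E ⊗[ℤ] F`. -/
def ModTensor (R : Type u) [Ring R] (E F : Type u) [AddCommGroup E] [Module Rᵐᵒᵖ E]
    [AddCommGroup F] [Module R F] : Type u :=
  TensorProduct ℤ E F ⧸ balancedSub R E F

noncomputable instance (R : Type u) [Ring R] (E F : Type u) [AddCommGroup E] [Module Rᵐᵒᵖ E]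
    [AddCommGroup F] [Module R F] : AddCommGroup (ModTensor R E F) :=
  inferInstanceAs (AddCommGroup (TensorProduct ℤ E F ⧸ balancedSub R E F))

/-- The map `E ⊗_R F → E' ⊗_R F` induced by a map `g : E → E'` of right `R`-modules. -/
noncomputable def ModTensor.mapLeft (R : Type u) [Ring R] {E E' : Type u} [AddCommGroup E]
    [Module Rᵐᵒᵖ E] [AddCommGroup E'] [Module Rᵐᵒᵖ E'] (F : Type u) [AddCommGroup F]
    [Module R F] (g : E →ₗ[Rᵐᵒᵖ] E') : ModTensor R E F →ₗ[ℤ] ModTensor R E' F :=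
  Submodule.mapQ (balancedSub R E F) (balancedSub R E' F)
    (TensorProduct.map (g.restrictScalars ℤ) LinearMap.id)
    (by
      rw [balancedSub, Submodule.span_le]
      rintro x ⟨r, e, f, rfl⟩
      refine Submodule.subset_span ⟨r, g e, f, ?_⟩
      erw [map_sub, TensorProduct.map_tmul, TensorProduct.map_tmul]
      simp)

/-- The map `E ⊗_R F → E ⊗_R F'` induced by a map `f : F → F'` of left `R`-modules. -/
noncomputable def ModTensor.mapRight (R : Type u) [Ring R] (E : Type u) [AddCommGroup E]
    [Module Rᵐᵒᵖ E] {F F' : Type u} [AddCommGroup F] [Module R F] [AddCommGroup F']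
    [Module R F'] (f : F →ₗ[R] F') : ModTensor R E F →ₗ[ℤ] ModTensor R E F' :=
  Submodule.mapQ (balancedSub R E F) (balancedSub R E F')
    (TensorProduct.map LinearMap.id (f.restrictScalars ℤ))
    (by
      rw [balancedSub, Submodule.span_le]
      rintro x ⟨r, e, y, rfl⟩
      refine Submodule.subset_span ⟨r, e, f y, ?_⟩
      erw [map_sub, TensorProduct.map_tmul, TensorProduct.map_tmul]
      simp)

/-- A left module `F` over a (possibly noncommutative) ring `R` is flat if tensoring
with `F` preserves injectivity of maps of right `R`-modules. -/
def IsFlatModule (R : Type u) [Ring R] (F : Type u) [AddCommGroup F] [Module R F] : Prop :=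
  ∀ (E E' : Type u) [AddCommGroup E] [Module Rᵐᵒᵖ E] [AddCommGroup E'] [Module Rᵐᵒᵖ E']
    (g : E →ₗ[Rᵐᵒᵖ] E'), Function.Injective g →
      Function.Injective (ModTensor.mapLeft R F g)

/-- `Ext^i_R(M, L) = 0`, expressed using the `Ext` functor on the category of left
`R`-modules (with its `ℤ`-linear structure). -/
def ExtIsZero (R : Type u) [Ring R] (i : ℕ) (M L : Type u) [AddCommGroup M] [Module R M]
    [AddCommGroup L] [Module R L] : Prop :=
  Subsingleton ((((_root_.Ext ℤ (ModuleCat.{u} R) i).obj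
    (Opposite.op (ModuleCat.of R M))).obj (ModuleCat.of R L)) : Type u)

/-- `FlatDimLE R n L` means the left `R`-module `L` admits a flat resolution of
length at most `n`. -/
def FlatDimLE (R : Type u) [Ring R] : ℕ → ModuleCat.{u} R → Prop
  | 0, L => IsFlatModule R L
  | n + 1, L =>
    ∃ (F K : ModuleCat.{u} R) (ι : (K : Type u) →ₗ[R] F) (π : (F : Type u) →ₗ[R] L),
      IsFlatModule R F ∧ Function.Injective ι ∧ Function.Surjective π ∧
      Function.Exact ι π ∧ FlatDimLE R n K

/-- A left `R`-module `L` has finite flat dimension if it admits a finite resolution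
by flat modules. -/
def HasFiniteFlatDimension (R : Type u) [Ring R] (L : Type u) [AddCommGroup L]
    [Module R L] : Prop :=
  ∃ n : ℕ, FlatDimLE R n (ModuleCat.of R L)

/-- A left `R`-module `M` is Ding projective if there is an exact sequence
`⋯ → P₁ → P₀ → P₋₁ → P₋₂ → ⋯` of projective modules with `M ≅ ker (P₀ → P₋₁)`
which stays exact under `Hom_R(-, F)` for every flat module `F`. -/
def IsDingProjective (R : Type u) [Ring R] (M : Type u) [AddCommGroup M] [Module R M] : Prop :=
  ∃ (P : ℤ → ModuleCat.{u} R) (d : ∀ n : ℤ, (P (n + 1) : Type u) →ₗ[R] P n),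
    (∀ n, Module.Projective R (P n)) ∧
    (∀ n, Function.Exact (d (n + 1)) (d n)) ∧
    (∀ (F : Type u) [AddCommGroup F] [Module R F], IsFlatModule R F →
      ∀ n : ℤ, Function.Exact
        (fun g : (P n : Type u) →ₗ[R] F => g ∘ₗ d n)
        (fun g : (P (n + 1) : Type u) →ₗ[R] F => g ∘ₗ d (n + 1))) ∧
    Nonempty (M ≃ₗ[R] LinearMap.ker (d (-1)))

/-- A left `R`-module `M` is two-degree Ding projective if there is an exact sequence
`⋯ → D₁ → D₀ → D₋₁ → D₋₂ → ⋯` of Ding projective modules with `M ≅ ker (D₀ → D₋₁)`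
which stays exact under `Hom_R(-, F)` for every flat module `F`. -/
def IsTwoDegreeDingProjective (R : Type u) [Ring R] (M : Type u) [AddCommGroup M]
    [Module R M] : Prop :=
  ∃ (D : ℤ → ModuleCat.{u} R) (d : ∀ n : ℤ, (D (n + 1) : Type u) →ₗ[R] D n),
    (∀ n, IsDingProjective R (D n)) ∧
    (∀ n, Function.Exact (d (n + 1)) (d n)) ∧
    (∀ (F : Type u) [AddCommGroup F] [Module R F], IsFlatModule R F →
      ∀ n : ℤ, Function.Exact
        (fun g : (D n : Type u) →ₗ[R] F => g ∘ₗ d n)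
        (fun g : (D (n + 1) : Type u) →ₗ[R] F => g ∘ₗ d (n + 1))) ∧
    Nonempty (M ≃ₗ[R] LinearMap.ker (d (-1)))

/-- A left `R`-module `M` is strongly two-degree Ding projective if there is an exact
sequence `⋯ →f D →f D →f D →f ⋯` with `D` Ding projective and a single map `f`, with
`M ≅ ker f`, which stays exact under `Hom_R(-, F)` for every flat module `F`. -/
def IsStronglyTwoDegreeDingProjective (R : Type u) [Ring R] (M : Type u) [AddCommGroup M]
    [Module R M] : Prop :=
  ∃ (D : ModuleCat.{u} R) (f : (D : Type u) →ₗ[R] D),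
    IsDingProjective R D ∧
    Function.Exact f f ∧
    (∀ (F : Type u) [AddCommGroup F] [Module R F], IsFlatModule R F →
      Function.Exact
        (fun g : (D : Type u) →ₗ[R] F => g ∘ₗ f)
        (fun g : (D : Type u) →ₗ[R] F => g ∘ₗ f)) ∧
    Nonempty (M ≃ₗ[R] LinearMap.ker f)

/-- A left `R`-module `M` is Gorenstein projective if there is an exact sequence
`⋯ → P₁ → P₀ → P₋₁ → P₋₂ → ⋯` of projective modules with `M ≅ ker (P₀ → P₋₁)`
which stays exact under `Hom_R(-, Q)` for every projective module `Q`. -/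
def IsGorensteinProjective (R : Type u) [Ring R] (M : Type u) [AddCommGroup M]
    [Module R M] : Prop :=
  ∃ (P : ℤ → ModuleCat.{u} R) (d : ∀ n : ℤ, (P (n + 1) : Type u) →ₗ[R] P n),
    (∀ n, Module.Projective R (P n)) ∧
    (∀ n, Function.Exact (d (n + 1)) (d n)) ∧
    (∀ (Q : Type u) [AddCommGroup Q] [Module R Q], Module.Projective R Q →
      ∀ n : ℤ, Function.Exact
        (fun g : (P n : Type u) →ₗ[R] Q => g ∘ₗ d n)
        (fun g : (P (n + 1) : Type u) →ₗ[R] Q => g ∘ₗ d (n + 1))) ∧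
    Nonempty (M ≃ₗ[R] LinearMap.ker (d (-1)))

/-- A left `R`-module `H` is Gorenstein flat if there is an exact sequence
`⋯ → F₁ → F₀ → F₋₁ → F₋₂ → ⋯` of flat modules with `H ≅ ker (F₀ → F₋₁)` which stays
exact under `E ⊗_R -` for every injective right `R`-module `E`. -/
def IsGorensteinFlat (R : Type u) [Ring R] (H : Type u) [AddCommGroup H] [Module R H] : Prop :=
  ∃ (F : ℤ → ModuleCat.{u} R) (d : ∀ n : ℤ, (F (n + 1) : Type u) →ₗ[R] F n),
    (∀ n, IsFlatModule R (F n)) ∧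
    (∀ n, Function.Exact (d (n + 1)) (d n)) ∧
    (∀ (E : Type u) [AddCommGroup E] [Module Rᵐᵒᵖ E], Module.Injective Rᵐᵒᵖ E →
      ∀ n : ℤ, Function.Exact
        (ModTensor.mapRight R E (d (n + 1)))
        (ModTensor.mapRight R E (d n))) ∧
    Nonempty (H ≃ₗ[R] LinearMap.ker (d (-1)))

/-- A left `R`-module `E` is FP-injective if `Ext¹_R(F, E) = 0` for every finitely
presented module `F`. -/
def IsFPInjective (R : Type u) [Ring R] (E : Type u) [AddCommGroup E] [Module R E] : Prop :=
  ∀ (F : Type u) [AddCommGroup F] [Module R F], Module.FinitePresentation R F →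
    ExtIsZero R 1 F E

/-- A left `R`-module `M` is Ding injective if there is an exact sequence
`⋯ → E₁ → E₀ → E₋₁ → E₋₂ → ⋯` of injective modules with `M ≅ ker (E₀ → E₋₁)`
which stays exact under `Hom_R(H, -)` for every FP-injective module `H`. -/
def IsDingInjective (R : Type u) [Ring R] (M : Type u) [AddCommGroup M] [Module R M] : Prop :=
  ∃ (E : ℤ → ModuleCat.{u} R) (d : ∀ n : ℤ, (E (n + 1) : Type u) →ₗ[R] E n),
    (∀ n, Module.Injective R (E n)) ∧
    (∀ n, Function.Exact (d (n + 1)) (d n)) ∧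
    (∀ (H : Type u) [AddCommGroup H] [Module R H], IsFPInjective R H →
      ∀ n : ℤ, Function.Exact
        (fun g : H →ₗ[R] (E (n + 1 + 1) : Type u) => d (n + 1) ∘ₗ g)
        (fun g : H →ₗ[R] (E (n + 1) : Type u) => d n ∘ₗ g)) ∧
    Nonempty (M ≃ₗ[R] LinearMap.ker (d (-1)))

/-- A left `R`-module `M` is two-degree Ding injective if there is an exact sequence
`⋯ → D₁ → D₀ → D₋₁ → D₋₂ → ⋯` of Ding injective modules with `M ≅ ker (D₀ → D₋₁)`
which stays exact under `Hom_R(H, -)` for every FP-injective module `H`. -/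
def IsTwoDegreeDingInjective (R : Type u) [Ring R] (M : Type u) [AddCommGroup M]
    [Module R M] : Prop :=
  ∃ (D : ℤ → ModuleCat.{u} R) (d : ∀ n : ℤ, (D (n + 1) : Type u) →ₗ[R] D n),
    (∀ n, IsDingInjective R (D n)) ∧
    (∀ n, Function.Exact (d (n + 1)) (d n)) ∧
    (∀ (H : Type u) [AddCommGroup H] [Module R H], IsFPInjective R H →
      ∀ n : ℤ, Function.Exact
        (fun g : H →ₗ[R] (D (n + 1 + 1) : Type u) => d (n + 1) ∘ₗ g)
        (fun g : H →ₗ[R] (D (n + 1) : Type u) => d n ∘ₗ g)) ∧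
    Nonempty (M ≃ₗ[R] LinearMap.ker (d (-1)))


section Aux
variable {R : Type u} [Ring R] {ι : Type u}

lemma dfinsupp_exact_mapRange {A B C : ι → Type u}
    [∀ i, AddCommGroup (A i)] [∀ i, Module R (A i)]
    [∀ i, AddCommGroup (B i)] [∀ i, Module R (B i)]
    [∀ i, AddCommGroup (C i)] [∀ i, Module R (C i)]
    (f : ∀ i, A i →ₗ[R] B i) (g : ∀ i, B i →ₗ[R] C i)
    (h : ∀ i, Function.Exact (f i) (g i)) :
    Function.Exact (DFinsupp.mapRange.linearMap f) (DFinsupp.mapRange.linearMap g) := by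
  classical
  intro b
  constructor
  · intro hb
    have hbi : ∀ i, g i (b i) = 0 := by
      intro i
      have := DFunLike.congr_fun hb i
      simpa [DFinsupp.mapRange.linearMap_apply, DFinsupp.mapRange_apply] using this
    have hmem : ∀ i, b i ∈ Set.range (f i) := fun i => (h i (b i)).mp (hbi i)
    refine ⟨DFinsupp.mk b.support (fun i => (hmem i).choose), ?_⟩
    ext i
    simp only [DFinsupp.mapRange.linearMap_apply, DFinsupp.mapRange_apply]
    by_cases hi : i ∈ b.support
    · rw [DFinsupp.mk_apply, dif_pos hi]
      exact (hmem i).choose_spec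
    · rw [DFinsupp.mk_apply, dif_neg hi, map_zero]
      exact ((DFinsupp.notMem_support_iff).mp hi).symm
  · rintro ⟨a, rfl⟩
    ext i
    simp [DFinsupp.mapRange.linearMap_apply, DFinsupp.mapRange_apply,
      (h i).apply_apply_eq_zero]

lemma dfinsupp_exact_hom {A B C : ι → Type u}
    [∀ i, AddCommGroup (A i)] [∀ i, Module R (A i)]
    [∀ i, AddCommGroup (B i)] [∀ i, Module R (B i)]
    [∀ i, AddCommGroup (C i)] [∀ i, Module R (C i)]
    (F : Type u) [AddCommGroup F] [Module R F]
    (f : ∀ i, A i →ₗ[R] B i) (g : ∀ i, B i →ₗ[R] C i)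
    (h : ∀ i, Function.Exact
      (fun φ : C i →ₗ[R] F => φ ∘ₗ g i)
      (fun φ : B i →ₗ[R] F => φ ∘ₗ f i)) :
    Function.Exact
      (fun φ : (Π₀ i, C i) →ₗ[R] F => φ ∘ₗ DFinsupp.mapRange.linearMap g)
      (fun φ : (Π₀ i, B i) →ₗ[R] F => φ ∘ₗ DFinsupp.mapRange.linearMap f) := by
  classical
  intro φ
  constructor
  · intro hφ
    have hφi : ∀ i, (φ ∘ₗ DFinsupp.lsingle i) ∘ₗ f i = 0 := by
      intro i
      ext x
      have := DFunLike.congr_fun hφ (DFinsupp.single i x)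
      simpa [DFinsupp.mapRange.linearMap_apply, DFinsupp.mapRange_single] using this
    have hmem : ∀ i, ∃ ψ : C i →ₗ[R] F, ψ ∘ₗ g i = φ ∘ₗ DFinsupp.lsingle i :=
      fun i => (h i (φ ∘ₗ DFinsupp.lsingle i)).mp (hφi i)
    choose ψ hψ using hmem
    refine ⟨DFinsupp.coprodMap ψ, ?_⟩
    apply DFinsupp.lhom_ext
    intro i x
    have h1 : (DFinsupp.mapRange.linearMap g) (DFinsupp.single i x)
        = DFinsupp.single i (g i x) := by
      simp [DFinsupp.mapRange.linearMap_apply, DFinsupp.mapRange_single]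
    simp only [LinearMap.coe_comp, Function.comp_apply, h1,
      DFinsupp.coprodMap_apply_single]
    exact DFunLike.congr_fun (hψ i) x
  · rintro ⟨ψ, rfl⟩
    show (ψ ∘ₗ DFinsupp.mapRange.linearMap g) ∘ₗ DFinsupp.mapRange.linearMap f = 0
    apply DFinsupp.lhom_ext
    intro j x
    have h0 := DFunLike.congr_fun ((h j).apply_apply_eq_zero (ψ ∘ₗ DFinsupp.lsingle j)) x
    simp only [LinearMap.coe_comp, Function.comp_apply, DFinsupp.lsingle_apply,
      LinearMap.zero_apply] at h0 ⊢
    simpa [DFinsupp.mapRange.linearMap_apply, DFinsupp.mapRange_single] using h0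

noncomputable def dfinsuppKerEquiv {A B : ι → Type u}
    [∀ i, AddCommGroup (A i)] [∀ i, Module R (A i)]
    [∀ i, AddCommGroup (B i)] [∀ i, Module R (B i)]
    (f : ∀ i, A i →ₗ[R] B i) :
    (Π₀ i, LinearMap.ker (f i)) ≃ₗ[R]
      LinearMap.ker (DFinsupp.mapRange.linearMap (R := R) f) := by
  classical
  refine LinearEquiv.ofBijective
    (LinearMap.codRestrict _
      (DFinsupp.mapRange.linearMap (fun i => (LinearMap.ker (f i)).subtype)) ?_) ⟨?_, ?_⟩
  · intro x
    rw [LinearMap.mem_ker]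
    ext i
    simpa [DFinsupp.mapRange.linearMap_apply, DFinsupp.mapRange_apply] using (x i).2
  · intro x y hxy
    ext i
    have h2 := DFunLike.congr_fun (Subtype.ext_iff.mp hxy) i
    simp only [LinearMap.codRestrict_apply, DFinsupp.mapRange.linearMap_apply,
      DFinsupp.mapRange_apply, Submodule.coe_subtype] at h2
    exact h2
  · rintro ⟨y, hy⟩
    have hyi : ∀ i, y i ∈ LinearMap.ker (f i) := by
      intro i
      have := DFunLike.congr_fun (LinearMap.mem_ker.mp hy) i
      simpa [DFinsupp.mapRange.linearMap_apply, DFinsupp.mapRange_apply] using this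
    refine ⟨DFinsupp.mk y.support (fun i => ⟨y i, hyi i⟩), ?_⟩
    apply Subtype.ext
    ext i
    simp only [LinearMap.codRestrict_apply, DFinsupp.mapRange.linearMap_apply,
      DFinsupp.mapRange_apply]
    by_cases hi : i ∈ y.support
    · rw [DFinsupp.mk_apply, dif_pos hi]
      rfl
    · rw [DFinsupp.mk_apply, dif_neg hi]
      exact ((DFinsupp.notMem_support_iff).mp hi).symm

end Aux

/-- A direct sum of Ding projective left `R`-modules is Ding projective. -/
theorem ding_projective_directSum (R : Type u) [Ring R]
    (ι : Type u) (M : ι → Type u) [∀ i, AddCommGroup (M i)] [∀ i, Module R (M i)]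
    (hM : ∀ i, IsDingProjective R (M i)) :
    IsDingProjective R (⨁ i, M i) := by
  classical
  choose P d hproj hexact hhom hker using hM
  have e : ∀ i, M i ≃ₗ[R] LinearMap.ker (d i (-1)) := fun i => (hker i).some
  refine ⟨fun n => ModuleCat.of R (Π₀ i, (P i n : Type u)),
    fun n => DFinsupp.mapRange.linearMap (fun i => d i n), ?_, ?_, ?_, ?_⟩
  · intro n
    haveI : ∀ i, Module.Projective R (P i n) := fun i => hproj i n
    exact inferInstanceAs (Module.Projective R (Π₀ i, (P i n : Type u)))
  · intro n
    exact dfinsupp_exact_mapRange _ _ (fun i => hexact i n)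
  · intro F _ _ hF n
    exact dfinsupp_exact_hom F _ _ (fun i => hhom i F hF n)
  · exact ⟨(DFinsupp.mapRange.linearEquiv e).trans
      (dfinsuppKerEquiv (fun i => d i (-1)))⟩
end

section
/- Let R be an associative ring with unity and M a left R-module. Then M is strongly two-degree Ding projective if and only if there is a short exact sequence 0 → M → D → M → 0 with D Ding projective such that Hom_R(−, L) leaves this short exact sequence exact for every left R-module L of finite flat dimension. -/
universe u

open scoped TensorProduct DirectSum

section AuxStronglyTwoDegree

variable {R : Type u} [Ring R]

/-- Factor a linear map through a surjection whose kernel it kills. -/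
lemma factor_surj' {A B C : Type u} [AddCommGroup A] [Module R A]
    [AddCommGroup B] [Module R B] [AddCommGroup C] [Module R C]
    (p : A →ₗ[R] B) (hp : Function.Surjective p) (g : A →ₗ[R] C)
    (h : ∀ x, p x = 0 → g x = 0) : ∃ h' : B →ₗ[R] C, h' ∘ₗ p = g := by
  have hle : LinearMap.ker p ≤ LinearMap.ker g := fun x hx => h x hx
  let q : (A ⧸ LinearMap.ker p) →ₗ[R] C := (LinearMap.ker p).liftQ g hle
  let e : (A ⧸ LinearMap.ker p) ≃ₗ[R] B := p.quotKerEquivOfSurjective hp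
  refine ⟨q ∘ₗ (e.symm : B →ₗ[R] (A ⧸ LinearMap.ker p)), ?_⟩
  ext x
  have h1 : e.symm (p x) = Submodule.Quotient.mk x := by
    rw [LinearEquiv.symm_apply_eq]; rfl
  simp only [LinearMap.comp_apply, LinearEquiv.coe_coe, h1]
  rfl

section Complex
variable (P : ℤ → ModuleCat.{u} R) (d : ∀ n : ℤ, (P (n + 1) : Type u) →ₗ[R] P n)
  (hex : ∀ n, Function.Exact (d (n + 1)) (d n))

/-- The corestriction of `d (m+1)` onto `ker (d m)`. -/
noncomputable def cres (m : ℤ) : (P (m + 1 + 1) : Type u) →ₗ[R] LinearMap.ker (d m) :=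
  (d (m + 1)).codRestrict (LinearMap.ker (d m))
    (fun x => LinearMap.mem_ker.2 ((hex m).apply_apply_eq_zero x))

lemma cres_apply (m : ℤ) (x : (P (m + 1 + 1) : Type u)) :
    ((cres P d hex m x : LinearMap.ker (d m)) : (P (m + 1) : Type u)) = d (m + 1) x := rfl

lemma cres_surj (m : ℤ) : Function.Surjective (cres P d hex m) := by
  rintro ⟨y, hy⟩
  obtain ⟨x, hx⟩ := (hex m y).1 (LinearMap.mem_ker.1 hy)
  exact ⟨x, Subtype.ext hx⟩

lemma cres_d (m : ℤ) (x : (P (m + 1 + 1 + 1) : Type u)) :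
    cres P d hex m (d (m + 1 + 1) x) = 0 := by
  apply Subtype.ext
  simpa [cres_apply] using (hex (m + 1)).apply_apply_eq_zero x

lemma cres_eq_zero {m : ℤ} {x : (P (m + 1 + 1) : Type u)} (hx : cres P d hex m x = 0) :
    d (m + 1) x = 0 := by
  simpa [cres_apply] using congrArg Subtype.val hx

variable (hhom : ∀ (F : Type u) [AddCommGroup F] [Module R F], IsFlatModule R F →
      ∀ n : ℤ, Function.Exact
        (fun g : (P n : Type u) →ₗ[R] F => g ∘ₗ d n)
        (fun g : (P (n + 1) : Type u) →ₗ[R] F => g ∘ₗ d (n + 1)))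

include hex hhom in
/-- Maps from `ker (d m)` into a flat module extend to `P (m+1)`. -/
lemma ext_zero (K : Type u) [AddCommGroup K] [Module R K] (hK : IsFlatModule R K) (m : ℤ)
    (w : (LinearMap.ker (d m) : Type u) →ₗ[R] K) :
    ∃ s : (P (m + 1) : Type u) →ₗ[R] K, s ∘ₗ (LinearMap.ker (d m)).subtype = w := by
  have hg : (w ∘ₗ cres P d hex m) ∘ₗ d (m + 1 + 1) = 0 := by
    ext x
    simp [cres_d P d hex m x]
  obtain ⟨s, hs⟩ := (hhom K hK (m + 1) (w ∘ₗ cres P d hex m)).1 hg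
  have hs' : s ∘ₗ d (m + 1) = w ∘ₗ cres P d hex m := hs
  refine ⟨s, ?_⟩
  ext y
  obtain ⟨x, rfl⟩ := cres_surj P d hex m y
  have h2 := LinearMap.congr_fun hs' x
  simp only [LinearMap.comp_apply] at h2 ⊢
  rw [Submodule.subtype_apply, cres_apply, h2]

variable (hproj : ∀ n, Module.Projective R (P n))

include hex hhom hproj in
/-- Maps from `ker (d m)` into a module of finite flat dimension extend to `P (m+1)`. -/
lemma extP : ∀ (n : ℕ) (K : ModuleCat.{u} R), FlatDimLE R n K →
    ∀ (m : ℤ) (w : (LinearMap.ker (d m) : Type u) →ₗ[R] K),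
    ∃ s : (P (m + 1) : Type u) →ₗ[R] K, s ∘ₗ (LinearMap.ker (d m)).subtype = w := by
  intro n
  induction n with
  | zero =>
    intro K hK m w
    exact ext_zero P d hex hhom K hK m w
  | succ n ih =>
    intro K hK m w
    obtain ⟨F, K', ι, π, hF, hι, hπ, hexp, hK'⟩ := hK
    haveI := hproj (m + 1 + 1)
    obtain ⟨t, ht⟩ := Module.projective_lifting_property π (w ∘ₗ cres P d hex m) hπ
    have hmem : ∀ x : (P (m + 1 + 1 + 1) : Type u),
        t (d (m + 1 + 1) x) ∈ LinearMap.range ι := by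
      intro x
      have h0 : π (t (d (m + 1 + 1) x)) = 0 := by
        have h1 := LinearMap.congr_fun ht (d (m + 1 + 1) x)
        simp only [LinearMap.comp_apply] at h1
        rw [h1, cres_d P d hex m x, map_zero]
      exact LinearMap.mem_range.2 ((hexp _).1 h0)
    let eι := LinearEquiv.ofInjective ι hι
    let r : (P (m + 1 + 1 + 1) : Type u) →ₗ[R] K' :=
      (eι.symm : LinearMap.range ι →ₗ[R] K') ∘ₗ
        LinearMap.codRestrict (LinearMap.range ι) (t ∘ₗ d (m + 1 + 1)) hmem
    have hr : ∀ x, ι (r x) = t (d (m + 1 + 1) x) := by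
      intro x
      have h1 : eι (r x) = ⟨t (d (m + 1 + 1) x), hmem x⟩ := by
        simp only [r, LinearMap.comp_apply, LinearEquiv.coe_coe]
        rw [eι.apply_symm_apply]
        rfl
      have h2 := congrArg Subtype.val h1
      rwa [LinearEquiv.ofInjective_apply] at h2
    have hrd : ∀ x, r (d (m + 1 + 1 + 1) x) = 0 := by
      intro x
      apply hι
      rw [hr, (hex (m + 1 + 1)).apply_apply_eq_zero x, map_zero, map_zero]
    obtain ⟨rbar, hrbar⟩ := factor_surj' (cres P d hex (m + 1)) (cres_surj P d hex (m + 1)) r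
      (by
        intro x hx
        obtain ⟨z, rfl⟩ := (hex (m + 1 + 1) x).1 (cres_eq_zero P d hex hx)
        exact hrd z)
    obtain ⟨s, hs⟩ := ih K' hK' (m + 1) rbar
    have hsd : ∀ z, s (d (m + 1 + 1) z) = r z := by
      intro z
      have h1 := LinearMap.congr_fun hs (cres P d hex (m + 1) z)
      have h2 := LinearMap.congr_fun hrbar z
      simp only [LinearMap.comp_apply, Submodule.subtype_apply] at h1 h2
      rw [cres_apply] at h1
      rw [h1, h2]
    obtain ⟨e, he⟩ := factor_surj' (cres P d hex m) (cres_surj P d hex m) (t - ι ∘ₗ s)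
      (by
        intro x hx
        obtain ⟨z, rfl⟩ := (hex (m + 1) x).1 (cres_eq_zero P d hex hx)
        simp only [LinearMap.sub_apply, LinearMap.comp_apply]
        rw [hsd z, hr z, sub_self])
    have hπe : π ∘ₗ e = w := by
      ext y
      obtain ⟨x, rfl⟩ := cres_surj P d hex m y
      have h1 := LinearMap.congr_fun he x
      have h2 := LinearMap.congr_fun ht x
      have hπι : π (ι (s x)) = 0 := (hexp _).2 ⟨s x, rfl⟩
      simp only [LinearMap.comp_apply, LinearMap.sub_apply] at h1 h2 ⊢
      rw [h1, map_sub, h2, hπι, sub_zero]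
    obtain ⟨E, hE⟩ := ext_zero P d hex hhom F hF m e
    refine ⟨π ∘ₗ E, ?_⟩
    rw [LinearMap.comp_assoc, hE, hπe]

include hex hhom hproj in
/-- Lifting maps from `ker (d m)` along surjections whose kernel has finite flat
dimension. -/
lemma liftKer (n : ℕ) (K' : ModuleCat.{u} R) (hK' : FlatDimLE R n K')
    (X Kc : Type u) [AddCommGroup X] [Module R X] [AddCommGroup Kc] [Module R Kc]
    (ι : (K' : Type u) →ₗ[R] X) (π : X →ₗ[R] Kc) (hι : Function.Injective ι)
    (hπ : Function.Surjective π) (hexp : Function.Exact ι π) (m : ℤ)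
    (g : (LinearMap.ker (d m) : Type u) →ₗ[R] Kc) :
    ∃ u : (LinearMap.ker (d m) : Type u) →ₗ[R] X, π ∘ₗ u = g := by
  haveI := hproj (m + 1 + 1)
  obtain ⟨t, ht⟩ := Module.projective_lifting_property π (g ∘ₗ cres P d hex m) hπ
  have hmem : ∀ x : (P (m + 1 + 1 + 1) : Type u),
      t (d (m + 1 + 1) x) ∈ LinearMap.range ι := by
    intro x
    have h0 : π (t (d (m + 1 + 1) x)) = 0 := by
      have h1 := LinearMap.congr_fun ht (d (m + 1 + 1) x)
      simp only [LinearMap.comp_apply] at h1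
      rw [h1, cres_d P d hex m x, map_zero]
    exact LinearMap.mem_range.2 ((hexp _).1 h0)
  let eι := LinearEquiv.ofInjective ι hι
  let r : (P (m + 1 + 1 + 1) : Type u) →ₗ[R] K' :=
    (eι.symm : LinearMap.range ι →ₗ[R] K') ∘ₗ
      LinearMap.codRestrict (LinearMap.range ι) (t ∘ₗ d (m + 1 + 1)) hmem
  have hr : ∀ x, ι (r x) = t (d (m + 1 + 1) x) := by
    intro x
    have h1 : eι (r x) = ⟨t (d (m + 1 + 1) x), hmem x⟩ := by
      simp only [r, LinearMap.comp_apply, LinearEquiv.coe_coe]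
      rw [eι.apply_symm_apply]
      rfl
    have h2 := congrArg Subtype.val h1
    rwa [LinearEquiv.ofInjective_apply] at h2
  have hrd : ∀ x, r (d (m + 1 + 1 + 1) x) = 0 := by
    intro x
    apply hι
    rw [hr, (hex (m + 1 + 1)).apply_apply_eq_zero x, map_zero, map_zero]
  obtain ⟨rbar, hrbar⟩ := factor_surj' (cres P d hex (m + 1)) (cres_surj P d hex (m + 1)) r
    (by
      intro x hx
      obtain ⟨z, rfl⟩ := (hex (m + 1 + 1) x).1 (cres_eq_zero P d hex hx)
      exact hrd z)
  obtain ⟨s, hs⟩ := extP P d hex hhom hproj n K' hK' (m + 1) rbar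
  have hsd : ∀ z, s (d (m + 1 + 1) z) = r z := by
    intro z
    have h1 := LinearMap.congr_fun hs (cres P d hex (m + 1) z)
    have h2 := LinearMap.congr_fun hrbar z
    simp only [LinearMap.comp_apply, Submodule.subtype_apply] at h1 h2
    rw [cres_apply] at h1
    rw [h1, h2]
  obtain ⟨u, hu⟩ := factor_surj' (cres P d hex m) (cres_surj P d hex m) (t - ι ∘ₗ s)
    (by
      intro x hx
      obtain ⟨z, rfl⟩ := (hex (m + 1) x).1 (cres_eq_zero P d hex hx)
      simp only [LinearMap.sub_apply, LinearMap.comp_apply]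
      rw [hsd z, hr z, sub_self])
  refine ⟨u, ?_⟩
  ext y
  obtain ⟨x, rfl⟩ := cres_surj P d hex m y
  have h1 := LinearMap.congr_fun hu x
  have h2 := LinearMap.congr_fun ht x
  have hπι : π (ι (s x)) = 0 := (hexp _).2 ⟨s x, rfl⟩
  simp only [LinearMap.comp_apply, LinearMap.sub_apply] at h1 h2 ⊢
  rw [h1, map_sub, h2, hπι, sub_zero]

end Complex

/-- A Ding projective module lifts against surjections whose kernel has finite flat
dimension. -/
lemma liftD (D : Type u) [AddCommGroup D] [Module R D] (hD : IsDingProjective R D)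
    (n : ℕ) (K' : ModuleCat.{u} R) (hK' : FlatDimLE R n K')
    (X Kc : Type u) [AddCommGroup X] [Module R X] [AddCommGroup Kc] [Module R Kc]
    (ι : (K' : Type u) →ₗ[R] X) (π : X →ₗ[R] Kc) (hι : Function.Injective ι)
    (hπ : Function.Surjective π) (hexp : Function.Exact ι π)
    (g : D →ₗ[R] Kc) : ∃ u : D →ₗ[R] X, π ∘ₗ u = g := by
  obtain ⟨P, d, hproj, hex, hhom, ⟨eD⟩⟩ := hD
  obtain ⟨u, hu⟩ := liftKer P d hex hhom hproj n K' hK' X Kc ι π hι hπ hexp (-1)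
    (g ∘ₗ (eD.symm : (LinearMap.ker (d (-1)) : Type u) →ₗ[R] D))
  refine ⟨u ∘ₗ (eD : D →ₗ[R] (LinearMap.ker (d (-1)) : Type u)), ?_⟩
  ext x
  have h1 := LinearMap.congr_fun hu (eD x)
  simp only [LinearMap.comp_apply, LinearEquiv.coe_coe] at h1 ⊢
  rw [h1, eD.symm_apply_apply]

end AuxStronglyTwoDegree
section AuxClaim

variable {R : Type u} [Ring R]
variable (D : Type u) [AddCommGroup D] [Module R D] (f : D →ₗ[R] D)
  (hff : Function.Exact f f)

/-- Corestriction of `f` onto `ker f`. -/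
noncomputable def fres : D →ₗ[R] LinearMap.ker f :=
  f.codRestrict (LinearMap.ker f) (fun x => LinearMap.mem_ker.2 (hff.apply_apply_eq_zero x))

lemma fres_apply (x : D) : ((fres D f hff x : LinearMap.ker f) : D) = f x := rfl

lemma fres_surj : Function.Surjective (fres D f hff) := by
  rintro ⟨y, hy⟩
  obtain ⟨x, hx⟩ := (hff y).1 (LinearMap.mem_ker.1 hy)
  exact ⟨x, Subtype.ext hx⟩

lemma fres_f (x : D) : fres D f hff (f x) = 0 := by
  apply Subtype.ext
  simpa [fres_apply] using hff.apply_apply_eq_zero x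

lemma fres_eq_zero {x : D} (hx : fres D f hff x = 0) : f x = 0 := by
  simpa [fres_apply] using congrArg Subtype.val hx

variable (hflat : ∀ (F : Type u) [AddCommGroup F] [Module R F], IsFlatModule R F →
      Function.Exact
        (fun g : D →ₗ[R] F => g ∘ₗ f)
        (fun g : D →ₗ[R] F => g ∘ₗ f))

include hff hflat in
/-- Maps from `ker f` into a flat module extend to `D`. -/
lemma claim_zero (L : Type u) [AddCommGroup L] [Module R L] (hL : IsFlatModule R L)
    (w : (LinearMap.ker f : Type u) →ₗ[R] L) :
    ∃ s : D →ₗ[R] L, s ∘ₗ (LinearMap.ker f).subtype = w := by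
  have hg : (w ∘ₗ fres D f hff) ∘ₗ f = 0 := by
    ext x
    simp [fres_f D f hff x]
  obtain ⟨s, hs⟩ := (hflat L hL (w ∘ₗ fres D f hff)).1 hg
  have hs' : s ∘ₗ f = w ∘ₗ fres D f hff := hs
  refine ⟨s, ?_⟩
  ext y
  obtain ⟨x, rfl⟩ := fres_surj D f hff y
  have h2 := LinearMap.congr_fun hs' x
  simp only [LinearMap.comp_apply] at h2 ⊢
  rw [Submodule.subtype_apply, fres_apply, h2]

include hff hflat in
/-- Maps from `ker f` into a module of finite flat dimension extend to `D`. -/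
lemma claimP (hD : IsDingProjective R D) :
    ∀ (n : ℕ) (L : ModuleCat.{u} R), FlatDimLE R n L →
    ∀ w : (LinearMap.ker f : Type u) →ₗ[R] L,
    ∃ s : D →ₗ[R] L, s ∘ₗ (LinearMap.ker f).subtype = w := by
  intro n
  induction n with
  | zero =>
    intro L hL w
    exact claim_zero D f hff hflat L hL w
  | succ n ih =>
    intro L hL w
    obtain ⟨F, K', ι, π, hF, hι, hπ, hexp, hK'⟩ := hL
    obtain ⟨t, ht⟩ := liftD (R := R) D hD n K' hK' F L ι π hι hπ hexp (w ∘ₗ fres D f hff)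
    have hmem : ∀ x : D, t (f x) ∈ LinearMap.range ι := by
      intro x
      have h0 : π (t (f x)) = 0 := by
        have h1 := LinearMap.congr_fun ht (f x)
        simp only [LinearMap.comp_apply] at h1
        rw [h1, fres_f D f hff x, map_zero]
      exact LinearMap.mem_range.2 ((hexp _).1 h0)
    let eι := LinearEquiv.ofInjective ι hι
    let r : D →ₗ[R] K' :=
      (eι.symm : LinearMap.range ι →ₗ[R] K') ∘ₗ
        LinearMap.codRestrict (LinearMap.range ι) (t ∘ₗ f) hmem
    have hr : ∀ x, ι (r x) = t (f x) := by
      intro x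
      have h1 : eι (r x) = ⟨t (f x), hmem x⟩ := by
        simp only [r, LinearMap.comp_apply, LinearEquiv.coe_coe]
        rw [eι.apply_symm_apply]
        rfl
      have h2 := congrArg Subtype.val h1
      rwa [LinearEquiv.ofInjective_apply] at h2
    have hrd : ∀ x, r (f x) = 0 := by
      intro x
      apply hι
      rw [hr, hff.apply_apply_eq_zero x, map_zero, map_zero]
    obtain ⟨rbar, hrbar⟩ := factor_surj' (fres D f hff) (fres_surj D f hff) r
      (by
        intro x hx
        obtain ⟨z, rfl⟩ := (hff x).1 (fres_eq_zero D f hff hx)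
        exact hrd z)
    obtain ⟨s, hs⟩ := ih K' hK' rbar
    have hsd : ∀ z, s (f z) = r z := by
      intro z
      have h1 := LinearMap.congr_fun hs (fres D f hff z)
      have h2 := LinearMap.congr_fun hrbar z
      simp only [LinearMap.comp_apply, Submodule.subtype_apply] at h1 h2
      rw [fres_apply] at h1
      rw [h1, h2]
    obtain ⟨e, he⟩ := factor_surj' (fres D f hff) (fres_surj D f hff) (t - ι ∘ₗ s)
      (by
        intro x hx
        obtain ⟨z, rfl⟩ := (hff x).1 (fres_eq_zero D f hff hx)
        simp only [LinearMap.sub_apply, LinearMap.comp_apply]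
        rw [hsd z, hr z, sub_self])
    have hπe : π ∘ₗ e = w := by
      ext y
      obtain ⟨x, rfl⟩ := fres_surj D f hff y
      have h1 := LinearMap.congr_fun he x
      have h2 := LinearMap.congr_fun ht x
      have hπι : π (ι (s x)) = 0 := (hexp _).2 ⟨s x, rfl⟩
      simp only [LinearMap.comp_apply, LinearMap.sub_apply] at h1 h2 ⊢
      rw [h1, map_sub, h2, hπι, sub_zero]
    obtain ⟨E, hE⟩ := claim_zero D f hff hflat F hF e
    refine ⟨π ∘ₗ E, ?_⟩
    rw [LinearMap.comp_assoc, hE, hπe]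

end AuxClaim
/-- `M` is strongly two-degree Ding projective iff there is a short exact
sequence `0 → M → D → M → 0` with `D` Ding projective which stays exact under
`Hom_R(-, L)` for every module `L` of finite flat dimension. -/
theorem strongly_twoDegree_ding_projective_iff_hom_finite_flat_dim_exact (R : Type u)
    [Ring R] (M : Type u) [AddCommGroup M] [Module R M] :
    IsStronglyTwoDegreeDingProjective R M ↔
      ∃ (D : ModuleCat.{u} R) (ι : M →ₗ[R] D) (π : (D : Type u) →ₗ[R] M),
        Function.Injective ι ∧ Function.Surjective π ∧ Function.Exact ι π ∧
        IsDingProjective R D ∧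
        (∀ (L : Type u) [AddCommGroup L] [Module R L], HasFiniteFlatDimension R L →
          Function.Injective (fun g : M →ₗ[R] L => g ∘ₗ π) ∧
          Function.Exact
            (fun g : M →ₗ[R] L => g ∘ₗ π)
            (fun g : (D : Type u) →ₗ[R] L => g ∘ₗ ι) ∧
          Function.Surjective (fun g : (D : Type u) →ₗ[R] L => g ∘ₗ ι)) := by
  constructor
  · rintro ⟨D, f, hD, hff, hflat, ⟨e⟩⟩
    set ι : M →ₗ[R] D := (LinearMap.ker f).subtype ∘ₗ (e : M →ₗ[R] LinearMap.ker f) with hιdef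
    set π : (D : Type u) →ₗ[R] M :=
      (e.symm : (LinearMap.ker f : Type u) →ₗ[R] M) ∘ₗ fres D f hff with hπdef
    have hι : Function.Injective ι :=
      (LinearMap.ker f).injective_subtype.comp e.injective
    have hπ : Function.Surjective π :=
      e.symm.surjective.comp (fres_surj D f hff)
    have hπι : ∀ m : M, π (ι m) = 0 := by
      intro m
      have h1 : fres D f hff ((e m : D)) = 0 := by
        apply Subtype.ext
        simp only [fres_apply]
        exact (e m).2
      simp only [hπdef, hιdef, LinearMap.comp_apply, Submodule.subtype_apply,
        LinearEquiv.coe_coe, h1, map_zero]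
    have hexp : Function.Exact ι π := by
      intro x
      constructor
      · intro hx
        have h1 : fres D f hff x = 0 := by
          apply e.symm.injective
          simpa [hπdef] using hx
        have h2 : x ∈ LinearMap.ker f := LinearMap.mem_ker.2 (fres_eq_zero D f hff h1)
        exact ⟨e.symm ⟨x, h2⟩, by simp [hιdef]⟩
      · rintro ⟨m, rfl⟩
        exact hπι m
    refine ⟨D, ι, π, hι, hπ, hexp, hD, ?_⟩
    intro L _ _ hL
    obtain ⟨n, hn⟩ := hL
    refine ⟨?_, ?_, ?_⟩
    · intro g₁ g₂ h
      ext m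
      obtain ⟨x, rfl⟩ := hπ m
      exact LinearMap.congr_fun h x
    · intro g
      constructor
      · intro hg
        obtain ⟨h', hh'⟩ := factor_surj' π hπ g (by
          intro x hx
          obtain ⟨m, rfl⟩ := (hexp x).1 hx
          exact LinearMap.congr_fun hg m)
        exact ⟨h', hh'⟩
      · rintro ⟨h, rfl⟩
        ext m
        simp only [LinearMap.comp_apply, LinearMap.zero_apply, hπι m, map_zero]
    · intro h
      obtain ⟨s, hs⟩ := claimP D f hff hflat hD n (ModuleCat.of R L) hn
        (h ∘ₗ (e.symm : (LinearMap.ker f : Type u) →ₗ[R] M))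
      refine ⟨s, ?_⟩
      ext m
      have h1 := LinearMap.congr_fun hs (e m)
      simp only [LinearMap.comp_apply, Submodule.subtype_apply, LinearEquiv.coe_coe] at h1 ⊢
      rw [hιdef]
      simp only [LinearMap.comp_apply, Submodule.subtype_apply, LinearEquiv.coe_coe]
      rw [e.symm_apply_apply] at h1
      exact h1
  · rintro ⟨D, ι, π, hι, hπ, hexp, hD, hhom⟩
    have hπι : ∀ m : M, π (ι m) = 0 := fun m => (hexp (ι m)).2 ⟨m, rfl⟩
    refine ⟨D, ι ∘ₗ π, hD, ?_, ?_, ?_⟩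
    · intro x
      constructor
      · intro hx
        have h1 : π x = 0 := hι (by simpa using hx)
        obtain ⟨m, rfl⟩ := (hexp x).1 h1
        obtain ⟨z, rfl⟩ := hπ m
        exact ⟨z, rfl⟩
      · rintro ⟨z, rfl⟩
        simp only [LinearMap.comp_apply, hπι (π z), map_zero]
    · intro F _ _ hF
      have hfin : HasFiniteFlatDimension R F := ⟨0, by exact hF⟩
      obtain ⟨hinj, hexL, hsurj⟩ := hhom F hfin
      intro g
      constructor
      · intro hg
        have hgι : g ∘ₗ ι = 0 := by
          apply hinj
          ext x
          have h1 := LinearMap.congr_fun hg x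
          simp only [LinearMap.comp_apply, LinearMap.zero_apply] at h1 ⊢
          exact h1
        obtain ⟨h, hh⟩ := (hexL g).1 hgι
        obtain ⟨g', hg'⟩ := hsurj h
        refine ⟨g', ?_⟩
        ext x
        have h1 := LinearMap.congr_fun hg' (π x)
        have h2 := LinearMap.congr_fun hh x
        simp only [LinearMap.comp_apply] at h1 h2 ⊢
        rw [h1, h2]
      · rintro ⟨g', rfl⟩
        ext x
        simp only [LinearMap.comp_apply, LinearMap.zero_apply, hπι (π x), map_zero]
    · have hker : LinearMap.range ι = LinearMap.ker (ι ∘ₗ π) := by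
        ext x
        simp only [LinearMap.mem_ker, LinearMap.comp_apply]
        constructor
        · rintro ⟨m, rfl⟩
          rw [hπι m, map_zero]
        · intro hx
          have h1 : π x = 0 := hι (by simpa using hx)
          exact (hexp x).1 h1
      exact ⟨(LinearEquiv.ofInjective ι hι).trans (LinearEquiv.ofEq _ _ hker)⟩
end
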